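/- For an infinite cardinal κ, the Specker group ℤ^κ is not clipped but has no clipped direct summand; in particular ℤ^κ has no Main Decomposition. -/

import Mathlib

namespace Paper

open DirectSum

/-- A subgroup is a direct summand. -/
def IsSummand {G : Type*} [AddCommGroup G] (A : AddSubgroup G) : Prop :=
  ∃ B : AddSubgroup G, IsCompl A B

/-- A group has rank one: it is nonzero and embeds in `ℚ`. -/
def IsRankOne (G : Type*) [AddCommGroup G] : Prop :=
  (∃ x : G, x ≠ 0) ∧ ∃ f : G →+ ℚ, Function.Injective f

/-- A group is clipped if it has no rank-one direct summand. -/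
def IsClipped (G : Type*) [AddCommGroup G] : Prop :=
  ¬ ∃ A : AddSubgroup G, IsSummand A ∧ IsRankOne A

/-- A group is `τ`-clipped if it has no direct summand isomorphic to the
rank-one group `τ` (a subgroup of `ℚ` representing a type). -/
def IsClippedFor (G : Type*) [AddCommGroup G] (τ : AddSubgroup ℚ) : Prop :=
  ¬ ∃ A : AddSubgroup G, IsSummand A ∧ Nonempty (A ≃+ τ)

/-- A group is completely decomposable if it is a direct sum of rank-one
groups (nonzero subgroups of `ℚ`). -/
def IsCompletelyDecomposable (G : Type*) [AddCommGroup G] : Prop :=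
  ∃ (ι : Type) (τ : ι → AddSubgroup ℚ), (∀ i, τ i ≠ ⊥) ∧ Nonempty (G ≃+ ⨁ i, τ i)

/-- A group is `τ`-homogeneous completely decomposable if it is a direct sum
of copies of the rank-one group `τ`. -/
def IsHomogeneousCD (G : Type*) [AddCommGroup G] (τ : AddSubgroup ℚ) : Prop :=
  τ ≠ ⊥ ∧ ∃ ι : Type, Nonempty (G ≃+ ⨁ _i : ι, τ)

/-- Two groups are mono-equivalent if each embeds into the other. -/
def MonoEquiv (G H : Type*) [AddCommGroup G] [AddCommGroup H] : Prop :=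
  (∃ f : G →+ H, Function.Injective f) ∧ (∃ f : H →+ G, Function.Injective f)

/-- A subgroup is pure if `n • x ∈ H` implies `n • x ∈ n • H`. -/
def IsPure {G : Type*} [AddCommGroup G] (H : AddSubgroup G) : Prop :=
  ∀ (n : ℤ) (x : G), n • x ∈ H → ∃ y ∈ H, n • y = n • x

/-- A group is strongly separable if every pure rank-one subgroup is a
direct summand. -/
def StronglySeparable (G : Type*) [AddCommGroup G] : Prop :=
  ∀ H : AddSubgroup G, IsPure H → IsRankOne H → IsSummand H

/-- The pure closure of an element: all `x` with `n • x` a multiple of `g`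
for some `n ≠ 0`. -/
def pureClosure {G : Type*} [AddCommGroup G] (g : G) : AddSubgroup G where
  carrier := {x | ∃ n : ℤ, n ≠ 0 ∧ n • x ∈ AddSubgroup.zmultiples g}
  zero_mem' := ⟨1, one_ne_zero, by simpa using (AddSubgroup.zmultiples g).zero_mem⟩
  add_mem' := by
    rintro x y ⟨n, hn, hx⟩ ⟨m, hm, hy⟩
    refine ⟨n * m, mul_ne_zero hn hm, ?_⟩
    have h : (n * m) • (x + y) = m • (n • x) + n • (m • y) := by
      rw [smul_add, mul_smul, mul_smul, smul_comm n m x]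
    rw [h]
    exact add_mem (AddSubgroup.zsmul_mem _ hx m) (AddSubgroup.zsmul_mem _ hy n)
  neg_mem' := by
    rintro x ⟨n, hn, hx⟩
    exact ⟨n, hn, by rw [smul_neg]; exact neg_mem hx⟩

/-- A group is indecomposable if it is nonzero and has no nontrivial
direct sum decomposition. -/
def IsIndecomposableGroup (G : Type*) [AddCommGroup G] : Prop :=
  (∃ x : G, x ≠ 0) ∧ ∀ A B : AddSubgroup G, IsCompl A B → A = ⊥ ∨ B = ⊥


lemma not_countable_funBool : ¬ Countable (ℕ → Bool) := by
  intro hC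
  obtain ⟨f, hf⟩ := exists_surjective_nat (ℕ → Bool)
  obtain ⟨n, hn⟩ := hf (fun m => ! f m m)
  have h := congrFun hn n
  cases h2 : f n n <;> rw [h2] at h <;> simp [h2] at h

lemma eq_zero_of_all_pow_dvd {m : ℤ} (h : ∀ N : ℕ, (2:ℤ)^N ∣ m) : m = 0 := by
  by_contra hm
  have h1 : (2:ℤ)^(m.natAbs) ∣ |m| := (dvd_abs _ _).mpr (h m.natAbs)
  have h2 : (2:ℤ)^(m.natAbs) ≤ |m| := Int.le_of_dvd (abs_pos.mpr hm) h1
  have h3 : |m| = (m.natAbs : ℤ) := Int.abs_eq_natAbs m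
  have h4 : (m.natAbs : ℤ) < (2:ℤ)^(m.natAbs) := by
    have := @Nat.lt_two_pow_self m.natAbs
    exact_mod_cast this
  omega

lemma eq_zero_of_unbounded_dvd {m : ℤ} (h : ∀ N : ℕ, ∃ q : ℕ, N < q ∧ (q:ℤ) ∣ m) : m = 0 := by
  by_contra hm
  obtain ⟨q, hq1, hq2⟩ := h m.natAbs
  have h2 : (q:ℤ) ≤ |m| := Int.le_of_dvd (abs_pos.mpr hm) ((dvd_abs _ _).mpr hq2)
  have h3 : |m| = (m.natAbs : ℤ) := Int.abs_eq_natAbs m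
  omega

lemma exists_rankOne_summand {G : Type*} [AddCommGroup G] (f : G →+ ℤ) (hf : f ≠ 0) :
    ∃ A : AddSubgroup G, IsSummand A ∧ IsRankOne A := by
  obtain ⟨g, hg⟩ := Int.subgroup_cyclic f.range
  rw [← AddSubgroup.zmultiples_eq_closure] at hg
  have hg0 : g ≠ 0 := by
    rintro rfl
    apply hf
    ext x
    have hx : f x ∈ f.range := ⟨x, rfl⟩
    rw [hg] at hx
    obtain ⟨k, hk⟩ := AddSubgroup.mem_zmultiples_iff.mp hx
    simpa using hk.symm
  have hgmem : g ∈ f.range := by rw [hg]; exact AddSubgroup.mem_zmultiples g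
  obtain ⟨y, hy⟩ := hgmem
  refine ⟨AddSubgroup.zmultiples y, ⟨f.ker, ?_, ?_⟩, ?_, ?_⟩
  · -- disjoint
    rw [AddSubgroup.disjoint_def]
    intro x hx1 hx2
    obtain ⟨n, hn⟩ := AddSubgroup.mem_zmultiples_iff.mp hx1
    have hfx : f x = 0 := hx2
    have : n * g = 0 := by
      have := congrArg f hn
      rw [map_zsmul, hy, hfx] at this
      simpa [smul_eq_mul] using this
    have hn0 : n = 0 := by
      rcases mul_eq_zero.mp this with h | h
      · exact h
      · exact absurd h hg0
    rw [hn0] at hn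
    simp at hn
    exact hn.symm
  · -- codisjoint
    rw [codisjoint_iff]
    rw [eq_top_iff]
    intro x _
    have hx : f x ∈ f.range := ⟨x, rfl⟩
    rw [hg] at hx
    obtain ⟨m, hm⟩ := AddSubgroup.mem_zmultiples_iff.mp hx
    rw [AddSubgroup.mem_sup]
    refine ⟨m • y, ⟨m, rfl⟩, x - m • y, ?_, by abel⟩
    have : f (x - m • y) = 0 := by
      rw [map_sub, map_zsmul, hy]
      rw [← hm]
      abel
    exact this
  · -- nonzero
    have hy0 : y ≠ 0 := by
      rintro rfl
      rw [map_zero] at hy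
      exact hg0 hy.symm
    exact ⟨⟨y, AddSubgroup.mem_zmultiples y⟩, by simpa using hy0⟩
  · -- embeds in ℚ
    refine ⟨(Int.castAddHom ℚ).comp (f.comp (AddSubgroup.zmultiples y).subtype), ?_⟩
    intro a b hab
    simp only [AddMonoidHom.comp_apply, Int.coe_castAddHom, AddSubgroup.coe_subtype,
      Int.cast_injective.eq_iff] at hab
    obtain ⟨n, hn⟩ := AddSubgroup.mem_zmultiples_iff.mp a.2
    obtain ⟨m, hm⟩ := AddSubgroup.mem_zmultiples_iff.mp b.2
    have hfa : f a.1 = n * g := by rw [← hn, map_zsmul, hy, smul_eq_mul]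
    have hfb : f b.1 = m * g := by rw [← hm, map_zsmul, hy, smul_eq_mul]
    have : n = m := by
      rw [hfa, hfb] at hab
      exact mul_right_cancel₀ hg0 hab
    apply Subtype.ext
    rw [← hn, ← hm, this]

noncomputable def el {ι : Type} (ν : ℕ → ι) (c : ℕ → ℤ) : ι → ℤ :=
  fun i => @dite _ (∃ k, ν k = i) (Classical.propDecidable _) (fun h => c h.choose) (fun _ => 0)

lemma el_apply {ι : Type} {ν : ℕ → ι} (hν : Function.Injective ν) (c : ℕ → ℤ) (k : ℕ) :
    el ν c (ν k) = c k := by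
  have h : ∃ k', ν k' = ν k := ⟨k, rfl⟩
  simp only [el, dif_pos h]
  congr 1
  exact hν h.choose_spec

lemma el_apply_not {ι : Type} {ν : ℕ → ι} (c : ℕ → ℤ) {i : ι} (h : ¬ ∃ k, ν k = i) :
    el ν c i = 0 := by
  simp only [el, dif_neg h]

lemma el_mod {ι : Type} [DecidableEq ι] {ν : ℕ → ι} (hν : Function.Injective ν)
    (h : (ι → ℤ) →+ ℤ)
    (c : ℕ → ℤ) (M : ℤ) (N : ℕ) (hc : ∀ k, N ≤ k → M ∣ c k) :
    ∃ d : ℤ, h (el ν c) = (∑ k ∈ Finset.range N, c k * h (Pi.single (ν k) 1)) + M * d := by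
  set w : ι → ℤ := el ν (fun k => if k < N then 0 else c k / M) with hw
  have hsplit : el ν c =
      (∑ k ∈ Finset.range N, c k • Pi.single (ν k) (1:ℤ)) + M • w := by
    funext i
    by_cases hi : ∃ k, ν k = i
    · obtain ⟨k, rfl⟩ := hi
      have hsum : (∑ k' ∈ Finset.range N, c k' • Pi.single (ν k') (1:ℤ) : ι → ℤ) (ν k)
          = if k ∈ Finset.range N then c k else 0 := by
        rw [Finset.sum_apply]
        rw [← Finset.sum_ite_eq' (Finset.range N) k (fun k' => c k')]
        apply Finset.sum_congr rfl
        intro k' _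
        rw [Pi.smul_apply, Pi.single_apply, smul_eq_mul]
        by_cases hkk : ν k = ν k'
        · rw [if_pos hkk, if_pos (hν hkk).symm]
          simp
        · rw [if_neg hkk, if_neg (fun e => hkk (by rw [e]))]
          simp
      rw [Pi.add_apply, hsum, el_apply hν, Pi.smul_apply, hw, el_apply hν]
      simp only [Finset.mem_range, smul_eq_mul]
      by_cases hk : k < N
      · rw [if_pos hk, if_pos hk]; ring
      · rw [if_neg hk, if_neg hk, Int.mul_ediv_cancel' (hc k (le_of_not_gt hk))]; ring
    · rw [Pi.add_apply, el_apply_not _ hi, Finset.sum_apply, Pi.smul_apply, hw,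
        el_apply_not _ hi]
      rw [Finset.sum_eq_zero]
      · simp
      · intro k' _
        rw [Pi.smul_apply, Pi.single_eq_of_ne (fun e => hi ⟨k', e.symm⟩)]
        simp
  refine ⟨h w, ?_⟩
  rw [hsplit, map_add, map_sum]
  congr 1
  · apply Finset.sum_congr rfl
    intro k _
    rw [map_zsmul, smul_eq_mul]
  · rw [map_zsmul, smul_eq_mul]

/-- A nonzero subgroup of `ℚ` that embeds into `ℤ^ι` admits an injective hom to `ℤ`. -/
lemma embeds_int {ι : Type} (τ : AddSubgroup ℚ) (hτ : τ ≠ ⊥)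
    (F : ↥τ →+ (ι → ℤ)) (hF : Function.Injective F) :
    ∃ ψ : ↥τ →+ ℤ, Function.Injective ψ := by
  have hne : ∃ t ∈ τ, t ≠ 0 := by
    by_contra hc
    push_neg at hc
    exact hτ ((AddSubgroup.eq_bot_iff_forall τ).mpr hc)
  obtain ⟨t, ht, ht0⟩ := hne
  have hbound : ∃ Nb : ℕ, ∀ q : ℕ, 0 < q → (∃ s ∈ τ, (q:ℚ) * s = t) → q ≤ Nb := by
    by_contra hb
    push_neg at hb
    have hF0 : F ⟨t, ht⟩ = 0 := by
      funext i
      have hdvd : ∀ N : ℕ, ∃ q : ℕ, N < q ∧ (q:ℤ) ∣ (F ⟨t, ht⟩ i) := by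
        intro N
        obtain ⟨q, hq0, ⟨s, hs, hqs⟩, hNq⟩ := hb N
        refine ⟨q, hNq, ?_⟩
        have hsm : (q:ℤ) • (⟨s, hs⟩ : ↥τ) = ⟨t, ht⟩ := by
          apply Subtype.ext
          push_cast
          simpa [zsmul_eq_mul] using hqs
        have hFt : F ⟨t, ht⟩ = (q:ℤ) • F ⟨s, hs⟩ := by rw [← hsm, map_zsmul]
        rw [hFt]
        exact ⟨F ⟨s, hs⟩ i, by simp [mul_comm]⟩
      have := eq_zero_of_unbounded_dvd (fun N => hdvd N)
      simpa using this
    have : (⟨t, ht⟩ : ↥τ) = 0 := hF (by rw [hF0, map_zero])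
    exact ht0 (by simpa using congrArg Subtype.val this)
  obtain ⟨Nb, hNb⟩ := hbound
  set N : ℕ := max Nb 1 with hN
  have hNb' : ∀ q : ℕ, 0 < q → (∃ s ∈ τ, (q:ℚ) * s = t) → q ≤ N :=
    fun q hq hs => le_trans (hNb q hq hs) (le_max_left _ _)
  have hfac0 : ((Nat.factorial N) : ℚ) ≠ 0 := by
    exact_mod_cast Nat.factorial_ne_zero N
  set r : ℚ := t / (Nat.factorial N) with hr
  have hr0 : r ≠ 0 := div_ne_zero ht0 hfac0
  have key2 : ∀ s ∈ τ, ∃ m : ℤ, s = (m : ℚ) * r := by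
    intro s hs
    rcases eq_or_ne s 0 with rfl | hs0
    · exact ⟨0, by simp⟩
    set ρ : ℚ := s / t with hρ
    have hρ0 : ρ ≠ 0 := div_ne_zero hs0 ht0
    have hden : ((ρ.den : ℚ)) ≠ 0 := by
      exact_mod_cast ρ.den_nz
    have hst : ρ * t = s := div_mul_cancel₀ s ht0
    have h1 : (ρ.num:ℚ)/(ρ.den:ℚ) * (ρ.den:ℚ) = ρ * (ρ.den:ℚ) :=
      congrArg (fun y : ℚ => y * (ρ.den:ℚ)) (Rat.num_div_den ρ)
    have h2 : (ρ.num:ℚ)/(ρ.den:ℚ) * (ρ.den:ℚ) = (ρ.num:ℚ) := div_mul_cancel₀ _ hden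
    have h3 : ρ * (ρ.den:ℚ) = (ρ.num:ℚ) := by rw [← h1]; exact h2
    have hqs : (ρ.den : ℚ) * s = (ρ.num : ℚ) * t := by
      calc (ρ.den:ℚ) * s = (ρ.den:ℚ) * (ρ * t) := by rw [hst]
        _ = (ρ * (ρ.den:ℚ)) * t := by ring
        _ = (ρ.num:ℚ) * t := by rw [h3]
    have hcop : IsCoprime (ρ.num) ((ρ.den : ℤ)) := by
      rw [Int.isCoprime_iff_gcd_eq_one]
      simpa [Int.gcd, Int.natAbs_natCast] using ρ.reduced
    obtain ⟨u, v, huv⟩ := hcop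
    have hmem : u • s + v • t ∈ τ := add_mem (AddSubgroup.zsmul_mem τ hs u)
      (AddSubgroup.zsmul_mem τ ht v)
    have hval : u • s + v • t = t / (ρ.den : ℚ) := by
      apply mul_right_cancel₀ hden
      rw [div_mul_cancel₀ _ hden, zsmul_eq_mul, zsmul_eq_mul, add_mul]
      calc (u:ℚ) * s * ρ.den + (v:ℚ) * t * ρ.den
          = (u:ℚ) * ((ρ.den:ℚ) * s) + (v:ℚ) * (ρ.den:ℚ) * t := by ring
        _ = ((u:ℚ) * ρ.num + (v:ℚ) * ρ.den) * t := by rw [hqs]; ring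
        _ = t := by
            have hcast : ((u * ρ.num + v * ρ.den : ℤ) : ℚ) = ((1:ℤ):ℚ) := by
              exact_mod_cast congrArg (fun z : ℤ => (z:ℚ)) huv
            push_cast at hcast
            rw [hcast, one_mul]
    have hqmem : ∃ s' ∈ τ, ((ρ.den : ℕ) : ℚ) * s' = t := by
      refine ⟨u • s + v • t, hmem, ?_⟩
      rw [hval, mul_div_cancel₀ _ hden]
    have hqN : ρ.den ≤ N := hNb' ρ.den ρ.pos hqmem
    obtain ⟨w, hw⟩ := Nat.dvd_factorial ρ.pos hqN
    have hwnat : w ≠ 0 := by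
      intro h0
      rw [h0, mul_zero] at hw
      exact Nat.factorial_ne_zero N hw
    have hw0 : (w : ℚ) ≠ 0 := by exact_mod_cast hwnat
    refine ⟨ρ.num * w, ?_⟩
    have hfacq : ((Nat.factorial N) : ℚ) = (ρ.den : ℚ) * (w : ℚ) := by
      exact_mod_cast congrArg (fun n : ℕ => (n:ℚ)) hw
    rw [hr, hfacq]
    push_cast
    field_simp
    linear_combination hqs
  -- the embedding into ℤ
  have key3 : ∀ s : ↥τ, ∃ m : ℤ, ((s:ℚ) / r) = (m:ℚ) := by
    intro s
    obtain ⟨m, hm⟩ := key2 s s.2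
    exact ⟨m, by rw [hm, mul_div_cancel_right₀ _ hr0]⟩
  refine ⟨AddMonoidHom.mk' (fun s => ((s:ℚ) / r).num) ?_, ?_⟩
  · intro a b
    obtain ⟨ma, ha⟩ := key3 a
    obtain ⟨mb, hb⟩ := key3 b
    have hab : ((↑(a + b) : ℚ) / r) = ((ma + mb : ℤ) : ℚ) := by
      have hco : ((↑(a + b) : ℚ)) = (↑a + ↑b : ℚ) := rfl
      rw [hco, add_div, ha, hb]
      push_cast
      ring
    show ((↑(a + b) : ℚ) / r).num = ((↑a : ℚ) / r).num + ((↑b : ℚ) / r).num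
    rw [hab, ha, hb, Rat.num_intCast, Rat.num_intCast, Rat.num_intCast]
  · rw [injective_iff_map_eq_zero]
    intro s hs0
    obtain ⟨m, hm⟩ := key3 s
    simp only [AddMonoidHom.mk'_apply] at hs0
    rw [hm, Rat.num_intCast] at hs0
    rw [hs0] at hm
    push_cast at hm
    have : (s : ℚ) = 0 := by
      rcases div_eq_zero_iff.mp hm with h | h
      · exact h
      · exact absurd h hr0
    exact Subtype.ext this
lemma dfinsupp_finite_ne {J : Type} {M : J → Type*} [∀ j, AddCommGroup (M j)]
    (x : Π₀ j, M j) : {j | x j ≠ 0}.Finite := by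
  classical
  apply Set.Finite.subset (x.support : Finset J).finite_toSet
  intro j hj
  simpa using DFinsupp.mem_support_iff.mpr hj

theorem not_completelyDecomposable (ι : Type) [Infinite ι] :
    ¬ IsCompletelyDecomposable (ι → ℤ) := by
  classical
  rintro ⟨J, τ, hτ, ⟨φ⟩⟩
  have key : ∀ j : J, ∃ ψ : ↥(τ j) →+ ℤ, Function.Injective ψ := by
    intro j
    refine embeds_int (τ j) (hτ j)
      ((φ.symm.toAddMonoidHom).comp (DirectSum.of (fun j => ↥(τ j)) j)) ?_
    exact φ.symm.injective.comp (DirectSum.of_injective j)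
  choose ψ hψ using key
  let e : ℕ ↪ ι := Infinite.natEmbedding ι
  have he : Function.Injective (e : ℕ → ι) := e.injective
  let h : J → ((ι → ℤ) →+ ℤ) := fun j =>
    (ψ j).comp ((DFinsupp.evalAddMonoidHom j).comp φ.toAddMonoidHom)
  have hval : ∀ j x, h j x = ψ j (φ x j) := fun _ _ => rfl
  -- the countable set of relevant indices
  let K : Set J := ⋃ n : ℕ, {j | φ (Pi.single (e n) (1:ℤ)) j ≠ 0}
  have hKc : K.Countable :=
    Set.countable_iUnion (fun n => (dfinsupp_finite_ne _).countable)
  -- the continuum many elements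
  let c : (ℕ → Bool) → ℕ → ℤ := fun T k => if T k then 2^k else 0
  let x : (ℕ → Bool) → (ι → ℤ) := fun T => el e (c T)
  have hsupp : ∀ T j, j ∉ K → φ (x T) j = 0 := by
    intro T j hj
    have hzero : ∀ n, (h j) (Pi.single (e n) (1:ℤ)) = 0 := by
      intro n
      have h0 : φ (Pi.single (e n) (1:ℤ)) j = 0 := by
        by_contra hc0
        exact hj (Set.mem_iUnion.mpr ⟨n, hc0⟩)
      rw [hval, h0, map_zero]
    have hdvd : ∀ N : ℕ, (2:ℤ)^N ∣ h j (x T) := by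
      intro N
      have hcdvd : ∀ k, N ≤ k → ((2:ℤ)^N ∣ c T k) := by
        intro k hk
        show ((2:ℤ)^N ∣ if T k = true then 2^k else 0)
        split
        · exact pow_dvd_pow 2 hk
        · exact dvd_zero _
      obtain ⟨d, hd⟩ := el_mod he (h j) (c T) ((2:ℤ)^N) N hcdvd
      rw [hd]
      have hsz : (∑ k ∈ Finset.range N, c T k * (h j) (Pi.single (e k) 1)) = 0 :=
        Finset.sum_eq_zero (fun k _ => by rw [hzero k, mul_zero])
      rw [hsz, zero_add]
      exact Dvd.intro d rfl
    have h0 : h j (x T) = 0 := eq_zero_of_all_pow_dvd hdvd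
    rw [hval] at h0
    have := hψ j (by rw [h0, map_zero] : ψ j (φ (x T) j) = ψ j 0)
    exact this
  have hxinj : Function.Injective x := by
    intro T T' hTT
    funext k
    have h1 := congrFun hTT (e k)
    show T k = T' k
    have h2 : c T k = c T' k := by
      rw [← el_apply he (c T) k, ← el_apply he (c T') k]
      exact h1
    have h2' : (if T k = true then (2:ℤ)^k else 0) = (if T' k = true then (2:ℤ)^k else 0) := h2
    by_cases hT : T k = true <;> by_cases hT' : T' k = true
    · rw [hT, hT']
    · exfalso; rw [if_pos hT, if_neg hT'] at h2'; exact absurd h2' (by positivity)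
    · exfalso; rw [if_neg hT, if_pos hT'] at h2'; exact absurd h2'.symm (by positivity)
    · rw [Bool.not_eq_true] at hT hT'; rw [hT, hT']
  -- counting
  obtain ⟨inj, hinj⟩ := Set.countable_iff_exists_injective.mp hKc
  let g : (ℕ → Bool) → (↥K → ℚ) := fun T jk => ((φ (x T)) jk : ℚ)
  have hginj : Function.Injective g := by
    intro T T' hg
    apply hxinj
    apply φ.injective
    apply DFinsupp.ext
    intro j
    by_cases hj : j ∈ K
    · have := congrFun hg ⟨j, hj⟩
      exact Subtype.ext this
    · rw [hsupp T j hj, hsupp T' j hj]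
  have hgfin : ∀ T, {jk : ↥K | g T jk ≠ 0}.Finite := by
    intro T
    have hsub : {jk : ↥K | g T jk ≠ 0} ⊆ Subtype.val ⁻¹' {j | φ (x T) j ≠ 0} := by
      intro jk hjk
      simp only [Set.mem_preimage, Set.mem_setOf_eq]
      intro h0
      apply hjk
      show ((φ (x T)) jk : ℚ) = 0
      rw [h0]
      rfl
    exact Set.Finite.subset ((dfinsupp_finite_ne _).preimage (Subtype.val_injective.injOn)) hsub
  let Enc : (ℕ → Bool) → Set (ℕ × ℚ) := fun T =>
    (fun jk => (inj jk, g T jk)) '' {jk : ↥K | g T jk ≠ 0}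
  have hEncFin : ∀ T, (Enc T).Finite := fun T => (hgfin T).image _
  let EncF : (ℕ → Bool) → Finset (ℕ × ℚ) := fun T => (hEncFin T).toFinset
  have hEinj : Function.Injective EncF := by
    intro T T' hE
    apply hginj
    funext jk
    have hss : Enc T = Enc T' := by
      have := congrArg (fun s : Finset (ℕ × ℚ) => (s : Set (ℕ × ℚ))) hE
      simpa [EncF, Set.Finite.coe_toFinset] using this
    by_cases h1 : g T jk = 0 <;> by_cases h2 : g T' jk = 0
    · rw [h1, h2]
    · exfalso
      have hmem : (inj jk, g T' jk) ∈ Enc T' := ⟨jk, h2, rfl⟩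
      rw [← hss] at hmem
      obtain ⟨jk', hne', hpair⟩ := hmem
      obtain ⟨hfst, hsnd⟩ := Prod.ext_iff.mp hpair
      rw [hinj hfst] at hne'
      exact hne' h1
    · exfalso
      have hmem : (inj jk, g T jk) ∈ Enc T := ⟨jk, h1, rfl⟩
      rw [hss] at hmem
      obtain ⟨jk', hne', hpair⟩ := hmem
      obtain ⟨hfst, hsnd⟩ := Prod.ext_iff.mp hpair
      rw [hinj hfst] at hne'
      exact hne' h2
    · have hmem : (inj jk, g T jk) ∈ Enc T := ⟨jk, h1, rfl⟩
      rw [hss] at hmem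
      obtain ⟨jk', hne', hpair⟩ := hmem
      obtain ⟨hfst, hsnd⟩ := Prod.ext_iff.mp hpair
      rw [hinj hfst] at hsnd
      exact hsnd.symm
  have : Countable (ℕ → Bool) := Function.Injective.countable hEinj
  exact not_countable_funBool this

/-- For an infinite index set, the Specker group `ℤ^ι` is not
clipped, has no nonzero clipped direct summand, and has no Main
Decomposition. -/
theorem statement11 (ι : Type) [Infinite ι] :
    ¬ IsClipped (ι → ℤ) ∧
    (∀ S : AddSubgroup (ι → ℤ), IsSummand S → IsClipped S → S = ⊥) ∧
    ¬ ∃ A H : AddSubgroup (ι → ℤ), IsCompl A H ∧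
        IsCompletelyDecomposable A ∧ IsClipped H := by
  classical
  have part2 : ∀ S : AddSubgroup (ι → ℤ), S ≠ ⊥ → ¬ IsClipped ↥S := by
    intro S hS hclip
    have hex : ∃ x ∈ S, x ≠ 0 := by
      by_contra hc
      push_neg at hc
      exact hS ((AddSubgroup.eq_bot_iff_forall S).mpr hc)
    obtain ⟨xv, hxS, hx0⟩ := hex
    obtain ⟨i, hi⟩ : ∃ i, xv i ≠ 0 := by
      by_contra hc
      push_neg at hc
      exact hx0 (funext hc)
    have hf : ((Pi.evalAddMonoidHom (fun _ : ι => ℤ) i).comp S.subtype) ≠ 0 := by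
      intro h0
      apply hi
      have := DFunLike.congr_fun h0 ⟨xv, hxS⟩
      simpa using this
    exact hclip (exists_rankOne_summand _ hf)
  refine ⟨?_, ?_, ?_⟩
  · -- ℤ^ι is not clipped
    intro hclip
    obtain ⟨i⟩ : Nonempty ι := inferInstance
    have hf : (Pi.evalAddMonoidHom (fun _ : ι => ℤ) i) ≠ 0 := by
      intro h0
      have := DFunLike.congr_fun h0 (fun _ => (1:ℤ))
      simpa using this
    exact hclip (exists_rankOne_summand _ hf)
  · -- no nonzero clipped summand
    intro S _ hclip
    by_contra hS
    exact part2 S hS hclip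
  · -- no main decomposition
    rintro ⟨A, H, hAH, hA, hH⟩
    have hHbot : H = ⊥ := by
      by_contra hne
      exact part2 H hne hH
    rw [hHbot] at hAH
    have hAtop : A = ⊤ := codisjoint_bot.mp hAH.codisjoint
    rw [hAtop] at hA
    obtain ⟨J, τ, hτ, ⟨φ⟩⟩ := hA
    exact not_completelyDecomposable ι
      ⟨J, τ, hτ, ⟨(AddSubgroup.topEquiv.symm.trans φ : (ι → ℤ) ≃+ _)⟩⟩

end Paper
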